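/- Define R = ∑_{k=0}^∞ C(2k,k)² (1/5)^{2k}. Then R = ∫₀¹∫₀¹ dx dy / (1 − (2/5)cos(πx) − (2/5)cos(πy)), and R = (2/π)·K(4/5), where K is Legendre's complete elliptic integral of the first kind. -/

import Mathlib

open Real Finset MeasureTheory intervalIntegral

/-! ### The coefficients `cc n = C(2n,n)/4^n` -/

noncomputable def cc (n : ℕ) : ℝ := (Nat.choose (2*n) n : ℝ) / 4 ^ n

lemma choose_central_cast_succ (n : ℕ) :
    ((2*(n+1)).choose (n+1) : ℝ) * (n+1) = 2 * (2*n+1) * ((2*n).choose n : ℝ) := by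
  have h := Nat.succ_mul_centralBinom_succ n
  unfold Nat.centralBinom at h
  have := congrArg (fun k : ℕ => (k : ℝ)) h
  push_cast at this
  linarith

lemma cc_succ_mul (n : ℕ) : cc (n+1) * (2*n+2) = cc n * (2*n+1) := by
  have h := choose_central_cast_succ n
  have hP : (0:ℝ) < 4^n := by positivity
  unfold cc
  rw [pow_succ]
  field_simp
  nlinarith [h, hP]

lemma cc_succ (n : ℕ) : cc (n+1) = cc n * (2*n+1) / (2*n+2) := by
  have h := cc_succ_mul n
  field_simp
  linarith

lemma cc_pos (n : ℕ) : 0 < cc n := by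
  apply div_pos _ (by positivity)
  exact_mod_cast Nat.choose_pos (by omega)

lemma cc_le_one (n : ℕ) : cc n ≤ 1 := by
  induction n with
  | zero => simp [cc]
  | succ k ih =>
    rw [cc_succ]
    have h1 : (2*(k:ℝ)+1)/(2*k+2) ≤ 1 := by
      rw [div_le_one (by positivity)]; linarith
    calc cc k * (2*k+1) / (2*k+2) = cc k * ((2*k+1)/(2*k+2)) := by ring
    _ ≤ 1 := mul_le_one₀ ih (by positivity) h1

/-! ### The convolution identity `∑_{j≤n} cc j * cc (n-j) = 1` -/

lemma conv_sym (n : ℕ) :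
    ∑ j ∈ range (n+1), (j:ℝ) * (cc j * cc (n-j))
      = (n:ℝ)/2 * ∑ j ∈ range (n+1), cc j * cc (n-j) := by
  have h := Finset.sum_range_reflect (fun j => (j:ℝ) * (cc j * cc (n-j))) (n+1)
  simp only [Nat.add_sub_cancel] at h
  have h2 : ∑ j ∈ range (n+1), ((n - j : ℕ):ℝ) * (cc (n-j) * cc (n-(n-j)))
      = ∑ j ∈ range (n+1), (j:ℝ) * (cc j * cc (n-j)) := h
  have h3 : ∑ j ∈ range (n+1), (((n:ℝ) - j) * (cc j * cc (n-j)))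
      = ∑ j ∈ range (n+1), (j:ℝ) * (cc j * cc (n-j)) := by
    rw [← h2]
    apply Finset.sum_congr rfl
    intro j hj
    have hjn : j ≤ n := by simpa [Nat.lt_succ_iff] using hj
    rw [Nat.sub_sub_self hjn, Nat.cast_sub hjn]
    ring
  have h4 : ∑ j ∈ range (n+1), (((n:ℝ) - j) * (cc j * cc (n-j)))
      = (n:ℝ) * (∑ j ∈ range (n+1), cc j * cc (n-j))
        - ∑ j ∈ range (n+1), (j:ℝ) * (cc j * cc (n-j)) := by
    rw [Finset.mul_sum, ← Finset.sum_sub_distrib]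
    apply Finset.sum_congr rfl; intro j _; ring
  rw [h4] at h3
  linarith

lemma conv_cc (n : ℕ) : ∑ j ∈ range (n+1), cc j * cc (n-j) = 1 := by
  induction n with
  | zero => simp [cc]
  | succ n ih =>
    have key : ∑ j ∈ range (n+2), (j:ℝ) * (cc j * cc (n+1-j))
        = ((n:ℝ)+1)/2 * ∑ j ∈ range (n+1), cc j * cc (n-j) := by
      rw [Finset.sum_range_succ' (fun j => (j:ℝ) * (cc j * cc (n+1-j))) (n+1)]
      simp only [Nat.cast_zero, zero_mul, add_zero]
      have step : ∀ i ∈ range (n+1), ((i:ℝ)+1) * (cc (i+1) * cc (n+1-(i+1)))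
          = ((i:ℝ) + 1/2) * (cc i * cc (n-i)) := by
        intro i _
        have h := cc_succ_mul i
        have : ((i:ℝ)+1) * cc (i+1) = cc i * (2*i+1) / 2 := by linarith
        have hred : n + 1 - (i+1) = n - i := by omega
        rw [hred]
        calc ((i:ℝ)+1) * (cc (i+1) * cc (n-i)) = (((i:ℝ)+1) * cc (i+1)) * cc (n-i) := by ring
        _ = (cc i * (2*i+1)/2) * cc (n-i) := by rw [this]
        _ = ((i:ℝ) + 1/2) * (cc i * cc (n-i)) := by ring
      rw [Finset.sum_congr rfl (by exact_mod_cast step)]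
      have : ∑ i ∈ range (n+1), ((i:ℝ) + 1/2) * (cc i * cc (n-i))
          = (∑ i ∈ range (n+1), (i:ℝ) * (cc i * cc (n-i)))
            + (1/2) * ∑ i ∈ range (n+1), cc i * cc (n-i) := by
        rw [Finset.mul_sum, ← Finset.sum_add_distrib]
        apply Finset.sum_congr rfl; intro j _; ring
      rw [this, conv_sym n]
      ring
    have sym2 := conv_sym (n+1)
    push_cast at sym2
    rw [key, ih] at sym2
    have hn : ((n:ℝ)+1)/2 ≠ 0 := by positivity
    field_simp at sym2
    linarith

/-! ### The binomial series `∑ cc n xⁿ = 1/√(1-x)` -/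

lemma summable_norm_cc_pow {x : ℝ} (hx : |x| < 1) :
    Summable (fun n => ‖cc n * x^n‖) := by
  refine Summable.of_nonneg_of_le (fun n => norm_nonneg _) (fun n => ?_)
    (summable_geometric_of_lt_one (abs_nonneg x) hx)
  rw [norm_mul, norm_pow, Real.norm_eq_abs, Real.norm_eq_abs,
    abs_of_pos (cc_pos n)]
  calc cc n * |x|^n ≤ 1 * |x|^n := by
        apply mul_le_mul_of_nonneg_right (cc_le_one n) (by positivity)
  _ = |x|^n := one_mul _

lemma summable_cc_pow {x : ℝ} (hx : |x| < 1) : Summable (fun n => cc n * x^n) :=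
  (summable_norm_cc_pow hx).of_norm

lemma binom_series {x : ℝ} (h0 : 0 ≤ x) (h1 : x < 1) :
    ∑' n : ℕ, cc n * x ^ n = 1 / Real.sqrt (1 - x) := by
  have hax : |x| < 1 := by rwa [abs_of_nonneg h0]
  set t : ℝ := ∑' n : ℕ, cc n * x ^ n with ht
  have hsq : t * t = 1 / (1 - x) := by
    rw [ht, tsum_mul_tsum_eq_tsum_sum_range_of_summable_norm
      (summable_norm_cc_pow hax) (summable_norm_cc_pow hax)]
    have : ∀ n : ℕ, ∑ k ∈ range (n+1), (cc k * x^k) * (cc (n-k) * x^(n-k)) = x ^ n := by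
      intro n
      have : ∀ k ∈ range (n+1), (cc k * x^k) * (cc (n-k) * x^(n-k))
          = (cc k * cc (n-k)) * x ^ n := by
        intro k hk
        have hkn : k ≤ n := by simpa [Nat.lt_succ_iff] using hk
        rw [show (cc k * x^k) * (cc (n-k) * x^(n-k)) = (cc k * cc (n-k)) * (x^k * x^(n-k)) by ring,
          ← pow_add, Nat.add_sub_cancel' hkn]
      rw [Finset.sum_congr rfl this, ← Finset.sum_mul, conv_cc n, one_mul]
    rw [tsum_congr this, tsum_geometric_of_lt_one h0 h1, one_div]
  have ht0 : 0 ≤ t := tsum_nonneg (fun n => mul_nonneg (cc_pos n).le (pow_nonneg h0 n))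
  have h1x : (0:ℝ) < 1 - x := by linarith
  have : t = Real.sqrt (1/(1-x)) := by
    rw [← hsq, Real.sqrt_mul_self ht0]
  rw [this, Real.sqrt_div' 1 (le_of_lt h1x)]
  · simp [Real.sqrt_one]

/-! ### Combinatorial identities -/

lemma vandermonde_sq (k : ℕ) :
    ∑ m ∈ range (k+1), (k.choose m) * (k.choose m) = (2*k).choose k := by
  have h := Nat.add_choose_eq k k k
  rw [Finset.Nat.sum_antidiagonal_eq_sum_range_succ_mk] at h
  rw [two_mul, h]
  apply Finset.sum_congr rfl
  intro m hm
  have hm' : m ≤ k := by simpa [Nat.lt_succ_iff] using hm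
  rw [Nat.choose_symm hm']

lemma point_identity (k m : ℕ) (h : m ≤ k) :
    ((2*k).choose (2*m) : ℝ) * ((2*m).choose m) * ((2*(k-m)).choose (k-m))
      = ((2*k).choose k) * ((k.choose m))^2 := by
  have h1 : 2*m ≤ 2*k := by omega
  have h2 : m ≤ 2*m := by omega
  have h3 : k - m ≤ 2*(k-m) := by omega
  have h4 : k ≤ 2*k := by omega
  rw [Nat.cast_choose ℝ h1, Nat.cast_choose ℝ h2, Nat.cast_choose ℝ h3,
    Nat.cast_choose ℝ h4, Nat.cast_choose ℝ h]
  have e1 : 2*k - 2*m = 2*(k-m) := by omega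
  have e2 : 2*m - m = m := by omega
  have e3 : 2*(k-m) - (k-m) = k - m := by omega
  have e4 : 2*k - k = k := by omega
  rw [e1, e2, e3, e4]
  have f1 : ((2*(k-m)).factorial : ℝ) ≠ 0 := by exact_mod_cast (Nat.factorial_ne_zero _)
  have f2 : ((2*m).factorial : ℝ) ≠ 0 := by exact_mod_cast (Nat.factorial_ne_zero _)
  have f3 : (m.factorial : ℝ) ≠ 0 := by exact_mod_cast (Nat.factorial_ne_zero _)
  have f4 : ((k-m).factorial : ℝ) ≠ 0 := by exact_mod_cast (Nat.factorial_ne_zero _)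
  have f5 : (k.factorial : ℝ) ≠ 0 := by exact_mod_cast (Nat.factorial_ne_zero _)
  field_simp

lemma sum_even_identity (k : ℕ) :
    ∑ m ∈ range (k+1), ((2*k).choose (2*m) : ℝ) * (cc m * cc (k-m))
      = ((2*k).choose k : ℝ)^2 / 4^k := by
  have step : ∀ m ∈ range (k+1), ((2*k).choose (2*m) : ℝ) * (cc m * cc (k-m))
      = ((2*k).choose k : ℝ) * ((k.choose m : ℝ))^2 / 4^k := by
    intro m hm
    have hm' : m ≤ k := by simpa [Nat.lt_succ_iff] using hm
    have hpow : (4:ℝ)^m * 4^(k-m) = 4^k := by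
      rw [← pow_add, Nat.add_sub_cancel' hm']
    unfold cc
    rw [div_mul_div_comm, hpow, mul_div_assoc', ← mul_assoc, point_identity k m hm']
  rw [Finset.sum_congr rfl step, ← Finset.sum_div]
  congr 1
  rw [← Finset.mul_sum]
  have : ∑ m ∈ range (k+1), ((k.choose m : ℝ))^2 = ((2*k).choose k : ℝ) := by
    have := congrArg (fun n : ℕ => (n:ℝ)) (vandermonde_sq k)
    push_cast at this
    rw [← this]
    apply Finset.sum_congr rfl
    intro m _; ring
  rw [this]; ring

/-! ### Wallis integrals -/

lemma wallis_prod (n : ℕ) : ∏ i ∈ range n, (2*(i:ℝ)+1)/(2*i+2) = cc n := by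
  induction n with
  | zero => simp [cc]
  | succ k ih => rw [Finset.prod_range_succ, ih, cc_succ]; ring

lemma integral_sin_sq_half (n : ℕ) :
    ∫ x in (0:ℝ)..(π/2), Real.sin x ^ (2*n) = π/2 * cc n := by
  have hint : ∀ a b : ℝ, IntervalIntegrable (fun x => Real.sin x ^ (2*n)) MeasureTheory.volume a b :=
    fun a b => (Continuous.pow (Real.continuous_sin) _).intervalIntegrable a b
  have hsplit := intervalIntegral.integral_add_adjacent_intervals
    (a := (0:ℝ)) (b := π/2) (c := π) (hint 0 (π/2)) (hint (π/2) π)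
  have hsym : ∫ x in (π/2:ℝ)..π, Real.sin x ^ (2*n)
      = ∫ x in (0:ℝ)..(π/2), Real.sin x ^ (2*n) := by
    have := intervalIntegral.integral_comp_sub_left (a := (0:ℝ)) (b := π/2)
      (fun x => Real.sin x ^ (2*n)) π
    simp only [Real.sin_pi_sub, sub_zero] at this
    rw [show π - π/2 = π/2 by ring] at this
    rw [← this]
  have hfull : ∫ x in (0:ℝ)..π, Real.sin x ^ (2*n) = π * cc n := by
    rw [integral_sin_pow_even, wallis_prod]
  rw [hsym] at hsplit
  rw [hfull] at hsplit
  linarith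

lemma integral_cos_quarter (n : ℕ) :
    ∫ x in (0:ℝ)..(π/2), Real.cos x ^ n = ∫ x in (0:ℝ)..(π/2), Real.sin x ^ n := by
  have := intervalIntegral.integral_comp_sub_left (a := (0:ℝ)) (b := π/2)
    (fun x => Real.sin x ^ n) (π/2)
  simp only [Real.sin_pi_div_two_sub, sub_zero, sub_self] at this
  rw [← this]

lemma Wcos (n : ℕ) :
    ∫ x in (0:ℝ)..1, Real.cos (π*x) ^ n
      = (1 + (-1:ℝ)^n) / π * ∫ x in (0:ℝ)..(π/2), Real.sin x ^ n := by
  have hπ : (π:ℝ) ≠ 0 := Real.pi_ne_zero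
  have h1 : ∫ x in (0:ℝ)..1, Real.cos (π*x) ^ n
      = π⁻¹ • ∫ x in (0:ℝ)..π, Real.cos x ^ n := by
    have := intervalIntegral.integral_comp_mul_left (a := (0:ℝ)) (b := 1)
      (fun x => Real.cos x ^ n) hπ
    simpa using this
  have hint : ∀ a b : ℝ, IntervalIntegrable (fun x => Real.cos x ^ n) MeasureTheory.volume a b :=
    fun a b => (Continuous.pow (Real.continuous_cos) _).intervalIntegrable a b
  have hsplit := intervalIntegral.integral_add_adjacent_intervals
    (a := (0:ℝ)) (b := π/2) (c := π) (hint 0 (π/2)) (hint (π/2) π)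
  have hsym : ∫ x in (π/2:ℝ)..π, Real.cos x ^ n
      = (-1:ℝ)^n * ∫ x in (0:ℝ)..(π/2), Real.cos x ^ n := by
    have h2 := intervalIntegral.integral_comp_sub_left (a := (0:ℝ)) (b := π/2)
      (fun x => Real.cos x ^ n) π
    simp only [Real.cos_pi_sub, sub_zero] at h2
    rw [show π - π/2 = π/2 by ring] at h2
    rw [← h2, ← intervalIntegral.integral_const_mul]
    apply intervalIntegral.integral_congr
    intro x _
    exact neg_pow _ n
  rw [hsym] at hsplit
  rw [h1, ← hsplit, integral_cos_quarter]
  rw [smul_eq_mul]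
  ring

lemma Wcos_even (m : ℕ) : ∫ x in (0:ℝ)..1, Real.cos (π*x) ^ (2*m) = cc m := by
  rw [Wcos, integral_sin_sq_half]
  have : ((-1:ℝ))^(2*m) = 1 := by
    rw [pow_mul]; norm_num
  rw [this]
  field_simp
  ring

lemma Wcos_odd (m : ℕ) : ∫ x in (0:ℝ)..1, Real.cos (π*x) ^ (2*m+1) = 0 := by
  rw [Wcos]
  have : ((-1:ℝ))^(2*m+1) = -1 := by
    rw [pow_succ, pow_mul]; norm_num
  rw [this]
  norm_num

/-! ### Swapping `tsum` and interval integrals -/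

lemma tsum_intervalIntegral_swap {a b : ℝ} (hab : a ≤ b) {F : ℕ → ℝ → ℝ}
    (hcont : ∀ n, Continuous (F n)) {B : ℕ → ℝ}
    (hB : ∀ n, ∀ x ∈ Set.Icc a b, |F n x| ≤ B n) (hBsum : Summable B) :
    ∫ x in a..b, (∑' n, F n x) = ∑' n, ∫ x in a..b, F n x := by
  have hμ : ∀ n, Integrable (F n) (volume.restrict (Set.Ioc a b)) := fun n =>
    (hcont n).integrableOn_Ioc
  have hnn : ∀ n, (0:ℝ) ≤ ∫ x in Set.Ioc a b, ‖F n x‖ := fun n =>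
    integral_nonneg (fun x => norm_nonneg _)
  have hle : ∀ n, ∫ x in Set.Ioc a b, ‖F n x‖ ≤ B n * (b - a) := by
    intro n
    have hmono : ∫ x in Set.Ioc a b, ‖F n x‖ ≤ ∫ _x in Set.Ioc a b, B n := by
      apply setIntegral_mono_on (hμ n).norm (integrableOn_const measure_Ioc_lt_top.ne)
        measurableSet_Ioc
      intro x hx
      exact hB n x (Set.Ioc_subset_Icc_self hx)
    calc ∫ x in Set.Ioc a b, ‖F n x‖ ≤ ∫ _x in Set.Ioc a b, B n := hmono
    _ = B n * (b - a) := by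
        rw [setIntegral_const, Real.volume_real_Ioc_of_le hab,
          smul_eq_mul]
        ring
  have hsum : Summable (fun n => ∫ x in Set.Ioc a b, ‖F n x‖) :=
    Summable.of_nonneg_of_le hnn hle (hBsum.mul_right (b - a))
  have key := MeasureTheory.integral_tsum_of_summable_integral_norm hμ hsum
  rw [intervalIntegral.integral_of_le hab]
  rw [← key]
  apply tsum_congr
  intro n
  rw [intervalIntegral.integral_of_le hab]

/-! ### The statement -/

/-- `R = ∑_{k=0}^∞ C(2k,k)² (1/5)^{2k}`, the expected number of visits to the
starting point of the biased random walk. -/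
noncomputable def Rconst : ℝ :=
  ∑' k : ℕ, ((Nat.choose (2 * k) k : ℝ)) ^ 2 * (1 / 5) ^ (2 * k)

/-- Legendre's complete elliptic integral of the first kind,
`K(k) = ∫₀^{π/2} dθ / √(1 - k² sin²θ)`. -/
noncomputable def ellK (k : ℝ) : ℝ :=
  ∫ θ in (0 : ℝ)..(Real.pi / 2), 1 / Real.sqrt (1 - k ^ 2 * Real.sin θ ^ 2)

/-! ### Part 2: `Rconst = (2/π) K(4/5)` -/

lemma part2 : Rconst = (2 / Real.pi) * ellK (4 / 5) := by
  have hsin : ∀ θ : ℝ, Real.sin θ ^ 2 ≤ 1 := fun θ => by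
    have := Real.sin_sq_le_one θ; linarith [this]
  have hKey : ellK (4/5) = ∑' n : ℕ, (π/2) * (cc n ^ 2 * (16/25) ^ n) := by
    unfold ellK
    have hpt : ∀ θ : ℝ, 1 / Real.sqrt (1 - (4/5:ℝ)^2 * Real.sin θ ^ 2)
        = ∑' n : ℕ, cc n * ((16/25:ℝ)^n * Real.sin θ ^ (2*n)) := by
      intro θ
      have h0 : (0:ℝ) ≤ (16/25) * Real.sin θ ^ 2 := by positivity
      have h1 : (16/25:ℝ) * Real.sin θ ^ 2 < 1 := by nlinarith [hsin θ]
      have := binom_series h0 h1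
      rw [show (4/5:ℝ)^2 * Real.sin θ ^2 = (16/25) * Real.sin θ ^ 2 by norm_num, ← this]
      apply tsum_congr
      intro n
      rw [mul_pow, ← pow_mul]
    rw [intervalIntegral.integral_congr (g :=
      fun θ => ∑' n : ℕ, cc n * ((16/25:ℝ)^n * Real.sin θ ^ (2*n))) (fun θ _ => hpt θ)]
    rw [tsum_intervalIntegral_swap (by positivity)
      (fun n => by continuity)
      (B := fun n => (16/25:ℝ)^n)
      ?_ (summable_geometric_of_lt_one (by norm_num) (by norm_num))]
    · apply tsum_congr
      intro n
      rw [intervalIntegral.integral_const_mul, intervalIntegral.integral_const_mul,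
        integral_sin_sq_half]
      ring
    · intro n θ _
      have h2 : Real.sin θ ^ (2*n) ≤ 1 := by
        rw [pow_mul]
        apply pow_le_one₀ (by positivity) (hsin θ)
      have h3 : (0:ℝ) ≤ Real.sin θ ^ (2*n) := by rw [pow_mul]; positivity
      rw [abs_of_nonneg (mul_nonneg (cc_pos n).le (mul_nonneg (by positivity) h3))]
      calc cc n * ((16/25:ℝ)^n * Real.sin θ ^ (2*n))
          ≤ 1 * ((16/25:ℝ)^n * 1) := by
            apply mul_le_mul (cc_le_one n) _ (mul_nonneg (by positivity) h3) (by norm_num)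
            apply mul_le_mul_of_nonneg_left h2 (by positivity)
      _ = (16/25:ℝ)^n := by ring
  rw [hKey, tsum_mul_left]
  unfold Rconst
  rw [show (2/π) * ((π/2) * ∑' n : ℕ, cc n ^2 * (16/25:ℝ)^n)
      = ∑' n : ℕ, cc n ^2 * (16/25:ℝ)^n by
    field_simp]
  apply tsum_congr
  intro k
  unfold cc
  have h16 : (16:ℝ)^k ≠ 0 := by positivity
  rw [show ((1:ℝ)/5)^(2*k) = (1/25)^k by rw [pow_mul]; norm_num,
    show ((16:ℝ)/25)^k = 16^k * (1/25)^k by rw [← mul_pow]; norm_num,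
    show ((Nat.choose (2*k) k:ℝ)/4^k)^2 = (Nat.choose (2*k) k:ℝ)^2/16^k by
      rw [div_pow, show ((4:ℝ)^k)^2 = 16^k by rw [← pow_mul, mul_comm, pow_mul]; norm_num]]
  field_simp

/-! ### Part 1: `Rconst` equals the double integral -/

noncomputable def Wc (j : ℕ) : ℝ := ∫ y in (0:ℝ)..1, Real.cos (π*y) ^ j

lemma Wc_abs_le_one (j : ℕ) : |Wc j| ≤ 1 := by
  have h := intervalIntegral.norm_integral_le_of_norm_le_const (C := 1)
    (a := (0:ℝ)) (b := 1) (f := fun y => Real.cos (π*y)^j) ?_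
  · simpa [Wc] using h
  · intro y _
    rw [Real.norm_eq_abs, abs_pow]
    exact pow_le_one₀ (abs_nonneg _) (Real.abs_cos_le_one _)

lemma inner_int (x : ℝ) :
    ∫ y in (0:ℝ)..1, 1 / (1 - (2/5)*Real.cos (π*x) - (2/5)*Real.cos (π*y))
      = ∑' n : ℕ, (2/5:ℝ)^n
          * ∑ k ∈ range (n+1), Real.cos (π*x) ^ k * Wc (n-k) * ((n.choose k : ℝ)) := by
  set c := Real.cos (π*x) with hcdef
  have hc : |c| ≤ 1 := Real.abs_cos_le_one _
  have hpt : ∀ y : ℝ, 1 / (1 - (2/5)*c - (2/5)*Real.cos (π*y))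
      = ∑' n : ℕ, (2/5:ℝ)^n * (c + Real.cos (π*y))^n := by
    intro y
    have hcy : |Real.cos (π*y)| ≤ 1 := Real.abs_cos_le_one _
    have ht : ‖(2/5:ℝ)*(c + Real.cos (π*y))‖ < 1 := by
      rw [Real.norm_eq_abs, abs_mul]
      have : |c + Real.cos (π*y)| ≤ 2 := by
        calc |c + Real.cos (π*y)| ≤ |c| + |Real.cos (π*y)| := abs_add_le _ _
        _ ≤ 2 := by linarith
      calc |(2/5:ℝ)| * |c + Real.cos (π*y)| ≤ (2/5) * 2 := by
            rw [abs_of_pos (by norm_num : (0:ℝ) < 2/5)]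
            exact mul_le_mul_of_nonneg_left this (by norm_num)
      _ < 1 := by norm_num
    have hgs := (hasSum_geometric_of_norm_lt_one ht).tsum_eq
    rw [show 1 - (2/5)*c - (2/5)*Real.cos (π*y) = 1 - (2/5)*(c + Real.cos (π*y)) by ring,
      one_div, ← hgs]
    exact tsum_congr fun n => by rw [mul_pow]
  rw [intervalIntegral.integral_congr (g := fun y => ∑' n : ℕ, (2/5:ℝ)^n * (c + Real.cos (π*y))^n)
    (fun y _ => hpt y)]
  rw [tsum_intervalIntegral_swap (by norm_num)
    (fun n => by continuity)
    (B := fun n => (4/5:ℝ)^n) ?_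
    (summable_geometric_of_lt_one (by norm_num) (by norm_num))]
  · apply tsum_congr
    intro n
    rw [intervalIntegral.integral_const_mul]
    congr 1
    have hexp : ∀ y : ℝ, (c + Real.cos (π*y))^n
        = ∑ k ∈ range (n+1), c^k * Real.cos (π*y)^(n-k) * ((n.choose k : ℝ)) :=
      fun y => add_pow c _ n
    rw [intervalIntegral.integral_congr
      (g := fun y => ∑ k ∈ range (n+1), c^k * Real.cos (π*y)^(n-k) * ((n.choose k : ℝ)))
      (fun y _ => hexp y)]
    rw [intervalIntegral.integral_finset_sum
      (fun k _ => by apply Continuous.intervalIntegrable; continuity)]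
    apply Finset.sum_congr rfl
    intro k _
    have : (fun y => c^k * Real.cos (π*y)^(n-k) * ((n.choose k : ℝ)))
        = fun y => (c^k * (n.choose k : ℝ)) * Real.cos (π*y)^(n-k) := by
      funext y; ring
    rw [this, intervalIntegral.integral_const_mul]
    unfold Wc
    ring
  · intro n y _
    rw [abs_mul, abs_pow, abs_pow, show |(2/5:ℝ)| = 2/5 from by norm_num]
    have h2 : |c + Real.cos (π*y)| ≤ 2 := by
      calc |c + Real.cos (π*y)| ≤ |c| + |Real.cos (π*y)| := abs_add_le _ _
      _ ≤ 2 := by linarith [Real.abs_cos_le_one (π*y)]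
    calc (2/5:ℝ)^n * |c + Real.cos (π*y)|^n ≤ (2/5:ℝ)^n * 2^n :=
          mul_le_mul_of_nonneg_left (pow_le_pow_left₀ (abs_nonneg _) h2 n) (by positivity)
    _ = (4/5:ℝ)^n := by rw [← mul_pow]; norm_num

noncomputable def AA (n : ℕ) : ℝ := ∑ k ∈ range (n+1), Wc k * Wc (n-k) * ((n.choose k : ℝ))

lemma outer_int :
    (∫ x in (0:ℝ)..1, ∫ y in (0:ℝ)..1,
        1 / (1 - (2/5)*Real.cos (π*x) - (2/5)*Real.cos (π*y)))
      = ∑' n : ℕ, (2/5:ℝ)^n * AA n := by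
  rw [intervalIntegral.integral_congr (g := fun x => ∑' n : ℕ, (2/5:ℝ)^n
      * ∑ k ∈ range (n+1), Real.cos (π*x) ^ k * Wc (n-k) * ((n.choose k : ℝ)))
    (fun x _ => inner_int x)]
  rw [tsum_intervalIntegral_swap (by norm_num)
    (fun n => by continuity)
    (B := fun n => (4/5:ℝ)^n) ?_
    (summable_geometric_of_lt_one (by norm_num) (by norm_num))]
  · apply tsum_congr
    intro n
    rw [intervalIntegral.integral_const_mul]
    congr 1
    rw [intervalIntegral.integral_finset_sum
      (fun k _ => by apply Continuous.intervalIntegrable; continuity)]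
    apply Finset.sum_congr rfl
    intro k _
    have : (fun x => Real.cos (π*x)^k * Wc (n-k) * ((n.choose k : ℝ)))
        = fun x => (Wc (n-k) * (n.choose k : ℝ)) * Real.cos (π*x)^k := by
      funext y; ring
    rw [this, intervalIntegral.integral_const_mul]
    unfold Wc
    ring
  · intro n x _
    rw [abs_mul, abs_pow, show |(2/5:ℝ)| = 2/5 from by norm_num]
    have hS : |∑ k ∈ range (n+1), Real.cos (π*x) ^ k * Wc (n-k) * ((n.choose k : ℝ))|
        ≤ 2^n := by
      calc |∑ k ∈ range (n+1), Real.cos (π*x) ^ k * Wc (n-k) * ((n.choose k : ℝ))|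
          ≤ ∑ k ∈ range (n+1), |Real.cos (π*x) ^ k * Wc (n-k) * ((n.choose k : ℝ))| :=
            Finset.abs_sum_le_sum_abs _ _
      _ ≤ ∑ k ∈ range (n+1), ((n.choose k : ℝ)) := by
          apply Finset.sum_le_sum
          intro k _
          rw [abs_mul, abs_mul, abs_pow]
          have hck : |Real.cos (π*x)|^k ≤ 1 :=
            pow_le_one₀ (abs_nonneg _) (Real.abs_cos_le_one _)
          have : |((n.choose k : ℝ))| = ((n.choose k : ℝ)) := abs_of_nonneg (by positivity)
          rw [this]
          calc |Real.cos (π*x)|^k * |Wc (n-k)| * ((n.choose k : ℝ))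
              ≤ 1 * 1 * ((n.choose k : ℝ)) := by
                apply mul_le_mul_of_nonneg_right _ (by positivity)
                exact mul_le_mul hck (Wc_abs_le_one _) (abs_nonneg _) (by norm_num)
          _ = ((n.choose k : ℝ)) := by ring
      _ = 2^n := by
          rw [show ∑ k ∈ range (n+1), ((n.choose k:ℝ))
              = (((∑ k ∈ range (n+1), n.choose k : ℕ)):ℝ) by push_cast; rfl,
            Nat.sum_range_choose]
          push_cast; ring
    calc (2/5:ℝ)^n * |∑ k ∈ range (n+1), Real.cos (π*x) ^ k * Wc (n-k) * ((n.choose k : ℝ))|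
        ≤ (2/5:ℝ)^n * 2^n := mul_le_mul_of_nonneg_left hS (by positivity)
    _ = (4/5:ℝ)^n := by rw [← mul_pow]; norm_num

lemma Wc_even (m : ℕ) : Wc (2*m) = cc m := Wcos_even m
lemma Wc_odd (m : ℕ) : Wc (2*m+1) = 0 := Wcos_odd m

lemma AA_odd (m : ℕ) : AA (2*m+1) = 0 := by
  unfold AA
  apply Finset.sum_eq_zero
  intro k hk
  have hk' : k ≤ 2*m+1 := by simpa [Nat.lt_succ_iff] using hk
  rcases Nat.even_or_odd k with he | ho
  · obtain ⟨j, hj⟩ := he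
    have hj2 : k = 2*j := by omega
    have : 2*m+1-k = 2*(m-j)+1 := by omega
    rw [this, Wc_odd]
    ring
  · obtain ⟨j, hj⟩ := ho
    rw [hj, Wc_odd]
    ring

lemma AA_even (m : ℕ) : AA (2*m) = ((2*m).choose m : ℝ)^2 / 4^m := by
  unfold AA
  have hsub : (range (m+1)).image (fun j => 2*j) ⊆ range (2*m+1) := by
    intro k hk
    simp only [Finset.mem_image, Finset.mem_range] at hk ⊢
    obtain ⟨j, hj, rfl⟩ := hk
    omega
  have hzero : ∀ k ∈ range (2*m+1), k ∉ (range (m+1)).image (fun j => 2*j) →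
      Wc k * Wc (2*m-k) * (((2*m).choose k : ℝ)) = 0 := by
    intro k hk hk2
    have hk' : k ≤ 2*m := by simpa [Nat.lt_succ_iff] using hk
    rcases Nat.even_or_odd k with he | ho
    · exfalso
      obtain ⟨j, hj⟩ := he
      apply hk2
      simp only [Finset.mem_image, Finset.mem_range]
      exact ⟨j, by omega, by omega⟩
    · obtain ⟨j, hj⟩ := ho
      rw [hj, Wc_odd]
      ring
  rw [← Finset.sum_subset hsub hzero,
    Finset.sum_image (fun a _ b _ h => by omega)]
  rw [← sum_even_identity m]
  apply Finset.sum_congr rfl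
  intro j hj
  have hj' : j ≤ m := by simpa [Nat.lt_succ_iff] using hj
  have h1 : 2*m - 2*j = 2*(m-j) := by omega
  rw [h1, Wc_even, Wc_even]
  ring

lemma choose_le_4pow (m : ℕ) : ((2*m).choose m : ℝ) ≤ 4^m := by
  have h := cc_le_one m
  unfold cc at h
  rw [div_le_one (by positivity)] at h
  exact h

lemma Rterm_le (m : ℕ) : ((Nat.choose (2*m) m : ℝ))^2 * (1/5)^(2*m) ≤ (16/25:ℝ)^m := by
  have h1 : ((Nat.choose (2*m) m : ℝ))^2 ≤ 16^m := by
    calc ((Nat.choose (2*m) m : ℝ))^2 ≤ (4^m)^2 :=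
      pow_le_pow_left₀ (by positivity) (choose_le_4pow m) 2
    _ = 16^m := by rw [← pow_mul, mul_comm, pow_mul]; norm_num
  have h2 : ((1:ℝ)/5)^(2*m) = (1/25)^m := by rw [pow_mul]; norm_num
  rw [h2]
  calc ((Nat.choose (2*m) m : ℝ))^2 * (1/25)^m ≤ 16^m * (1/25)^m :=
    mul_le_mul_of_nonneg_right h1 (by positivity)
  _ = (16/25:ℝ)^m := by rw [← mul_pow]; norm_num

lemma summable_Rterm : Summable (fun m : ℕ => ((Nat.choose (2*m) m : ℝ))^2 * (1/5)^(2*m)) := by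
  apply Summable.of_nonneg_of_le (fun m => by positivity) Rterm_le
  exact summable_geometric_of_lt_one (by norm_num) (by norm_num)

lemma term_even (m : ℕ) :
    (2/5:ℝ)^(2*m) * AA (2*m) = ((Nat.choose (2*m) m : ℝ))^2 * (1/5)^(2*m) := by
  rw [AA_even]
  have e1 : ((2:ℝ)/5)^(2*m) = 4^m * (1/25)^m := by
    rw [pow_mul, show ((2:ℝ)/5)^2 = 4*(1/25) by norm_num, mul_pow]
  have e2 : ((1:ℝ)/5)^(2*m) = (1/25)^m := by rw [pow_mul]; norm_num
  rw [e1, e2]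
  have h4 : ((4:ℝ))^m ≠ 0 := by positivity
  field_simp

lemma part1 :
    Rconst = (∫ x in (0:ℝ)..1, ∫ y in (0:ℝ)..1,
        1 / (1 - (2/5)*Real.cos (π*x) - (2/5)*Real.cos (π*y))) := by
  rw [outer_int]
  set f : ℕ → ℝ := fun n => (2/5:ℝ)^n * AA n with hf
  have heq : (fun k => f (2*k)) = fun k => ((Nat.choose (2*k) k : ℝ))^2 * (1/5)^(2*k) := by
    funext k
    exact term_even k
  have hoeq : (fun k => f (2*k+1)) = fun _ => (0:ℝ) := by
    funext k
    simp only [hf, AA_odd, mul_zero]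
  have he : Summable (fun k => f (2*k)) := by rw [heq]; exact summable_Rterm
  have ho : Summable (fun k => f (2*k+1)) := by rw [hoeq]; exact summable_zero
  have key := tsum_even_add_odd he ho
  rw [heq, hoeq] at key
  simp only [tsum_zero, add_zero] at key
  unfold Rconst
  rw [key]

/-- `R = ∫₀¹∫₀¹ dx dy / (1 - (2/5)cos(πx) - (2/5)cos(πy))`
and `R = (2/π) K(4/5)`. -/
theorem stmt13 :
    Rconst = (∫ x in (0 : ℝ)..1, ∫ y in (0 : ℝ)..1,
        1 / (1 - (2 / 5) * Real.cos (Real.pi * x) - (2 / 5) * Real.cos (Real.pi * y))) ∧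
    Rconst = (2 / Real.pi) * ellK (4 / 5) := by
  exact ⟨part1, part2⟩
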